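/- For u, v ∈ L²(0,2π), defining ℐ(u)(x) = (1/(2π)) ∫₀^{2π} ∫_θ^x ( |u(y)|² − (1/(2π))‖u‖²_{L²} ) dy dθ, one has the pointwise bound ‖ℐ(u) − ℐ(v)‖_{L∞(0,2π)} ≤ 2 (‖u‖_{L²} + ‖v‖_{L²}) ‖u − v‖_{L²}. -/

import Mathlib

open Real MeasureTheory intervalIntegral

/-- Cauchy–Schwarz for nonnegative functions. -/
lemma cs_aux {μ : Measure ℝ} {f g : ℝ → ℝ} (hf0 : ∀ y, 0 ≤ f y) (hg0 : ∀ y, 0 ≤ g y)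
    (hf : Integrable (fun y => f y ^ 2) μ) (hg : Integrable (fun y => g y ^ 2) μ)
    (hfm : AEStronglyMeasurable f μ) (hgm : AEStronglyMeasurable g μ) :
    ∫ y, f y * g y ∂μ ≤ (∫ y, f y ^ 2 ∂μ) ^ ((1:ℝ)/2) * (∫ y, g y ^ 2 ∂μ) ^ ((1:ℝ)/2) := by
  have hpq : Real.HolderConjugate 2 2 := Real.HolderConjugate.two_two
  have hfm2 : MemLp f (ENNReal.ofReal 2) μ := by
    rw [show ENNReal.ofReal 2 = 2 by norm_num]
    exact (memLp_two_iff_integrable_sq hfm).2 hf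
  have hgm2 : MemLp g (ENNReal.ofReal 2) μ := by
    rw [show ENNReal.ofReal 2 = 2 by norm_num]
    exact (memLp_two_iff_integrable_sq hgm).2 hg
  have := MeasureTheory.integral_mul_le_Lp_mul_Lq_of_nonneg hpq
    (Filter.Eventually.of_forall hf0) (Filter.Eventually.of_forall hg0) hfm2 hgm2
  have e1 : (∫ y, f y ^ (2:ℝ) ∂μ) = ∫ y, f y ^ 2 ∂μ := by
    refine integral_congr_ae (Filter.Eventually.of_forall fun y => ?_)
    show f y ^ (2:ℝ) = f y ^ (2:ℕ)
    rw [← Real.rpow_natCast (f y) 2]; norm_num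
  have e2 : (∫ y, g y ^ (2:ℝ) ∂μ) = ∫ y, g y ^ 2 ∂μ := by
    refine integral_congr_ae (Filter.Eventually.of_forall fun y => ?_)
    show g y ^ (2:ℝ) = g y ^ (2:ℕ)
    rw [← Real.rpow_natCast (g y) 2]; norm_num
  rw [e1, e2] at this
  exact this

/-- The mean-zero periodic primitive `ℐ(f)` of `|f|² - (1/2π)‖f‖²_{L²(𝕋)}`. -/
noncomputable def gaugePhase (f : ℝ → ℂ) (x : ℝ) : ℝ :=
  (1 / (2 * π)) * ∫ θ in (0:ℝ)..(2 * π),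
    ∫ y in θ..x, (‖f y‖ ^ 2 - (1 / (2 * π)) * ∫ z in (0:ℝ)..(2 * π), ‖f z‖ ^ 2)

/-- Lipschitz bound `‖ℐ(u) - ℐ(v)‖_{L∞(0,2π)} ≤ 2(‖u‖_{L²} + ‖v‖_{L²})‖u - v‖_{L²}`. -/
theorem gaugePhase_lipschitz (u v : ℝ → ℂ)
    (hu : IntervalIntegrable (fun y => ‖u y‖ ^ 2) volume 0 (2 * π))
    (hv : IntervalIntegrable (fun y => ‖v y‖ ^ 2) volume 0 (2 * π))
    (huv : IntervalIntegrable (fun y => ‖u y - v y‖ ^ 2) volume 0 (2 * π)) :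
    ∀ x ∈ Set.Icc (0:ℝ) (2 * π),
      |gaugePhase u x - gaugePhase v x| ≤
        2 * ((∫ y in (0:ℝ)..(2 * π), ‖u y‖ ^ 2) ^ ((1:ℝ)/2)
              + (∫ y in (0:ℝ)..(2 * π), ‖v y‖ ^ 2) ^ ((1:ℝ)/2))
          * (∫ y in (0:ℝ)..(2 * π), ‖u y - v y‖ ^ 2) ^ ((1:ℝ)/2) := by
  intro x hx
  have hπ : (0:ℝ) < 2 * π := by positivity
  have h2π : (0:ℝ) ≤ 2 * π := hπ.le
  set A := ∫ y in (0:ℝ)..(2 * π), ‖u y‖ ^ 2 with hAdef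
  set B := ∫ y in (0:ℝ)..(2 * π), ‖v y‖ ^ 2 with hBdef
  set D := ∫ y in (0:ℝ)..(2 * π), ‖u y - v y‖ ^ 2 with hDdef
  set fu : ℝ → ℝ := fun y => ‖u y‖ ^ 2 - (1 / (2 * π)) * A with hfudef
  set fv : ℝ → ℝ := fun y => ‖v y‖ ^ 2 - (1 / (2 * π)) * B with hfvdef
  set μ : Measure ℝ := volume.restrict (Set.Ioc 0 (2 * π)) with hμdef
  -- interval integrability
  have hfu : IntervalIntegrable fu volume 0 (2 * π) := hu.sub intervalIntegrable_const
  have hfv : IntervalIntegrable fv volume 0 (2 * π) := hv.sub intervalIntegrable_const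
  have hxmem : x ∈ Set.uIcc (0:ℝ) (2 * π) := by
    rw [Set.uIcc_of_le h2π]; exact hx
  -- integrability w.r.t. μ
  have hu' : Integrable (fun y => ‖u y‖ ^ 2) μ := hu.1
  have hv' : Integrable (fun y => ‖v y‖ ^ 2) μ := hv.1
  have hw' : Integrable (fun y => ‖u y - v y‖ ^ 2) μ := huv.1
  have sqrt_meas : ∀ {f : ℝ → ℂ}, Integrable (fun y => ‖f y‖ ^ 2) μ →
      AEStronglyMeasurable (fun y => ‖f y‖) μ := by
    intro f hf
    have := Real.continuous_sqrt.comp_aestronglyMeasurable hf.aestronglyMeasurable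
    refine this.congr (Filter.Eventually.of_forall fun y => ?_)
    exact Real.sqrt_sq (norm_nonneg _)
  have hum := sqrt_meas hu'
  have hvm := sqrt_meas hv'
  have hwm := sqrt_meas (f := fun y => u y - v y) hw'
  have prod_int : ∀ {f : ℝ → ℝ}, Integrable (fun y => f y ^ 2) μ →
      AEStronglyMeasurable f μ → (∀ y, 0 ≤ f y) →
      Integrable (fun y => f y * ‖u y - v y‖) μ := by
    intro f hf hfm hf0
    refine Integrable.mono' (hf.add hw') (hfm.mul hwm)
      (Filter.Eventually.of_forall fun y => ?_)
    have h1 : 0 ≤ f y := hf0 y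
    have h2 : (0:ℝ) ≤ ‖u y - v y‖ := norm_nonneg _
    simp only [Pi.add_apply]
    rw [Real.norm_eq_abs, abs_of_nonneg (mul_nonneg h1 h2)]
    nlinarith [sq_nonneg (f y - ‖u y - v y‖), sq_nonneg (f y), sq_nonneg ‖u y - v y‖]
  have hp1 := prod_int hu' hum (fun y => norm_nonneg _)
  have hp2 := prod_int hv' hvm (fun y => norm_nonneg _)
  -- Cauchy–Schwarz pieces
  have hcs1 : ∫ y, ‖u y‖ * ‖u y - v y‖ ∂μ ≤
      (∫ y, ‖u y‖ ^ 2 ∂μ) ^ ((1:ℝ)/2) * (∫ y, ‖u y - v y‖ ^ 2 ∂μ) ^ ((1:ℝ)/2) :=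
    cs_aux (fun y => norm_nonneg _) (fun y => norm_nonneg _) hu' hw' hum hwm
  have hcs2 : ∫ y, ‖v y‖ * ‖u y - v y‖ ∂μ ≤
      (∫ y, ‖v y‖ ^ 2 ∂μ) ^ ((1:ℝ)/2) * (∫ y, ‖u y - v y‖ ^ 2 ∂μ) ^ ((1:ℝ)/2) :=
    cs_aux (fun y => norm_nonneg _) (fun y => norm_nonneg _) hv' hw' hvm hwm
  -- identify μ-integrals with interval integrals
  have hA' : ∫ y, ‖u y‖ ^ 2 ∂μ = A := (intervalIntegral.integral_of_le h2π).symm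
  have hB' : ∫ y, ‖v y‖ ^ 2 ∂μ = B := (intervalIntegral.integral_of_le h2π).symm
  have hD' : ∫ y, ‖u y - v y‖ ^ 2 ∂μ = D := (intervalIntegral.integral_of_le h2π).symm
  rw [hA', hD'] at hcs1
  rw [hB', hD'] at hcs2
  -- Step: ∫ |G| ≤ √A √D + √B √D  where G y = ‖u y‖² - ‖v y‖²
  set G : ℝ → ℝ := fun y => ‖u y‖ ^ 2 - ‖v y‖ ^ 2 with hGdef
  have hGint : Integrable G μ := hu'.sub hv'
  have hGbound : ∫ y, |G y| ∂μ ≤ A ^ ((1:ℝ)/2) * D ^ ((1:ℝ)/2) + B ^ ((1:ℝ)/2) * D ^ ((1:ℝ)/2) := by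
    have step : ∫ y, |G y| ∂μ ≤ ∫ y, (‖u y‖ * ‖u y - v y‖ + ‖v y‖ * ‖u y - v y‖) ∂μ := by
      refine integral_mono hGint.abs (hp1.add hp2) fun y => ?_
      have habs : |‖u y‖ - ‖v y‖| ≤ ‖u y - v y‖ := abs_norm_sub_norm_le _ _
      have h1 : |G y| = |‖u y‖ - ‖v y‖| * (‖u y‖ + ‖v y‖) := by
        rw [← abs_of_nonneg (show (0:ℝ) ≤ ‖u y‖ + ‖v y‖ by positivity), ← abs_mul]
        congr 1; simp only [hGdef]; ring
      rw [h1]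
      have h2 : |‖u y‖ - ‖v y‖| * (‖u y‖ + ‖v y‖) ≤ ‖u y - v y‖ * (‖u y‖ + ‖v y‖) :=
        mul_le_mul_of_nonneg_right habs (by positivity)
      calc |‖u y‖ - ‖v y‖| * (‖u y‖ + ‖v y‖) ≤ ‖u y - v y‖ * (‖u y‖ + ‖v y‖) := h2
        _ = ‖u y‖ * ‖u y - v y‖ + ‖v y‖ * ‖u y - v y‖ := by ring
    rw [integral_add hp1 hp2] at step
    exact step.trans (add_le_add hcs1 hcs2)
  -- pointwise inner bound
  set c : ℝ := (1 / (2 * π)) * A - (1 / (2 * π)) * B with hcdef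
  have hfufv : ∀ y, fu y - fv y = G y - c := fun y => by simp only [hfudef, hfvdef, hGdef, hcdef]; ring
  set K := ∫ y in (0:ℝ)..(2 * π), |fu y - fv y| with hKdef
  -- K ≤ 2 ∫ |G|
  have hKbound : K ≤ 2 * ∫ y, |G y| ∂μ := by
    have hAB : A - B = ∫ y in (0:ℝ)..(2 * π), G y := (intervalIntegral.integral_sub hu hv).symm
    have hABabs : |A - B| ≤ ∫ y, |G y| ∂μ := by
      rw [hAB]
      calc |∫ y in (0:ℝ)..(2 * π), G y| ≤ ∫ y in (0:ℝ)..(2 * π), |G y| :=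
            intervalIntegral.abs_integral_le_integral_abs h2π
        _ = ∫ y, |G y| ∂μ := intervalIntegral.integral_of_le h2π
    have hcval : |c| = (1 / (2 * π)) * |A - B| := by
      rw [hcdef, ← mul_sub, abs_mul, abs_of_nonneg (by positivity : (0:ℝ) ≤ 1 / (2 * π))]
    have hK1 : K ≤ ∫ y, (|G y| + |c|) ∂μ := by
      rw [hKdef, intervalIntegral.integral_of_le h2π]
      refine integral_mono ((hfu.sub hfv).1.abs) (hGint.abs.add (integrable_const _)) fun y => ?_
      rw [hfufv y]
      exact (abs_sub _ _)
    have hK2 : ∫ y, (|G y| + |c|) ∂μ = (∫ y, |G y| ∂μ) + (2 * π) * |c| := by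
      rw [integral_add hGint.abs (integrable_const _), MeasureTheory.integral_const]
      simp [hμdef, Measure.restrict_apply_univ, smul_eq_mul, mul_comm, Real.volume_Ioc, ENNReal.toReal_ofReal h2π]
      exact Or.inl pi_pos.le
    have : (2 * π) * |c| ≤ ∫ y, |G y| ∂μ := by
      rw [hcval]
      have : (2 * π) * ((1 / (2 * π)) * |A - B|) = |A - B| := by
        field_simp
      rw [this]; exact hABabs
    calc K ≤ ∫ y, (|G y| + |c|) ∂μ := hK1
      _ = (∫ y, |G y| ∂μ) + (2 * π) * |c| := hK2
      _ ≤ (∫ y, |G y| ∂μ) + ∫ y, |G y| ∂μ := by linarith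
      _ = 2 * ∫ y, |G y| ∂μ := by ring
  -- inner pointwise estimate: for θ ∈ Ι 0 (2π), the inner integral difference is ≤ K
  have hinner : ∀ θ ∈ Set.uIoc (0:ℝ) (2 * π),
      ‖(∫ y in θ..x, fu y) - ∫ y in θ..x, fv y‖ ≤ K := by
    intro θ hθ
    rw [Set.uIoc_of_le h2π] at hθ
    have hθIcc : θ ∈ Set.Icc (0:ℝ) (2 * π) := ⟨hθ.1.le, hθ.2⟩
    have hsub : Set.uIcc θ x ⊆ Set.uIcc (0:ℝ) (2 * π) := by
      rw [Set.uIcc_of_le h2π]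
      exact Set.uIcc_subset_Icc hθIcc hx
    have huθ : IntervalIntegrable fu volume θ x := hfu.mono_set hsub
    have hvθ : IntervalIntegrable fv volume θ x := hfv.mono_set hsub
    rw [← intervalIntegral.integral_sub huθ hvθ]
    have hsub' : Set.uIoc θ x ⊆ Set.Ioc (0:ℝ) (2 * π) := by
      rw [Set.uIoc]
      exact Set.Ioc_subset_Ioc (le_min hθ.1.le hx.1) (max_le hθ.2 hx.2)
    calc ‖∫ y in θ..x, (fu y - fv y)‖
        ≤ ∫ y in Set.uIoc θ x, ‖fu y - fv y‖ :=
          intervalIntegral.norm_integral_le_integral_norm_uIoc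
      _ ≤ ∫ y in Set.Ioc (0:ℝ) (2 * π), ‖fu y - fv y‖ := by
          refine setIntegral_mono_set (hfu.sub hfv).1.norm
            (Filter.Eventually.of_forall fun y => norm_nonneg _)
            (HasSubset.Subset.eventuallyLE hsub')
      _ = K := by
          rw [hKdef, intervalIntegral.integral_of_le h2π]
          simp [Real.norm_eq_abs]
  -- continuity/integrability of the outer integrands
  have hFcont : ∀ {f : ℝ → ℝ}, IntervalIntegrable f volume 0 (2 * π) →
      IntervalIntegrable (fun θ => ∫ y in θ..x, f y) volume 0 (2 * π) := by
    intro f hf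
    have hc : ContinuousOn (fun θ => ∫ y in x..θ, f y) (Set.uIcc (0:ℝ) (2 * π)) :=
      intervalIntegral.continuousOn_primitive_interval' hf hxmem
    have hc2 : ContinuousOn (fun θ => ∫ y in θ..x, f y) (Set.uIcc (0:ℝ) (2 * π)) := by
      refine hc.neg.congr fun θ _ => ?_
      exact intervalIntegral.integral_symm x θ
    exact hc2.intervalIntegrable
  have hFu_int := hFcont hfu
  have hFv_int := hFcont hfv
  -- outer estimate
  have houter : |gaugePhase u x - gaugePhase v x| ≤ K := by
    have hgU : gaugePhase u x = (1 / (2 * π)) * ∫ θ in (0:ℝ)..(2 * π), ∫ y in θ..x, fu y := rfl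
    have hgV : gaugePhase v x = (1 / (2 * π)) * ∫ θ in (0:ℝ)..(2 * π), ∫ y in θ..x, fv y := rfl
    rw [hgU, hgV, ← mul_sub, ← intervalIntegral.integral_sub hFu_int hFv_int]
    have hnorm : ‖∫ θ in (0:ℝ)..(2 * π), ((∫ y in θ..x, fu y) - ∫ y in θ..x, fv y)‖ ≤
        K * |2 * π - 0| :=
      intervalIntegral.norm_integral_le_of_norm_le_const hinner
    rw [abs_mul, abs_of_nonneg (by positivity : (0:ℝ) ≤ 1 / (2 * π))]
    rw [Real.norm_eq_abs] at hnorm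
    have hKnn : 0 ≤ K := by
      rw [hKdef]
      exact intervalIntegral.integral_nonneg h2π fun y _ => abs_nonneg _
    calc (1 / (2 * π)) * |∫ θ in (0:ℝ)..(2 * π), ((∫ y in θ..x, fu y) - ∫ y in θ..x, fv y)|
        ≤ (1 / (2 * π)) * (K * |2 * π - 0|) := by
          exact mul_le_mul_of_nonneg_left hnorm (by positivity)
      _ = K := by
          rw [sub_zero, abs_of_nonneg h2π]
          field_simp
  -- combine
  calc |gaugePhase u x - gaugePhase v x| ≤ K := houter
    _ ≤ 2 * ∫ y, |G y| ∂μ := hKbound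
    _ ≤ 2 * (A ^ ((1:ℝ)/2) * D ^ ((1:ℝ)/2) + B ^ ((1:ℝ)/2) * D ^ ((1:ℝ)/2)) := by linarith
    _ = 2 * (A ^ ((1:ℝ)/2) + B ^ ((1:ℝ)/2)) * D ^ ((1:ℝ)/2) := by ring
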